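/- Let C, A_1, …, A_m ∈ M_n be Hermitian with C = diag(c_1, …, c_n), c_1 ≥ … ≥ c_n. For a unit vector v = (v_1, …, v_m)^t ∈ ℝ^m let 𝓟_v(A) = {(a_1, …, a_m) ∈ ℝ^m : Σ_{j=1}^m v_j a_j ≤ Σ_{j=1}^n c_j λ_j(v_1 A_1 + … + v_m A_m)}, where λ_1(H) ≥ … ≥ λ_n(H) denote the eigenvalues of a Hermitian matrix H in descending order. Then conv W_C(A_1, …, A_m) = ⋂ {𝓟_v(A) : v ∈ ℝ^m, v^t v = 1}. -/

import Mathlib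

open Matrix

/-- The joint `C`-numerical range of a tuple of Hermitian matrices, regarded as a
subset of `ℝ^m`. -/
noncomputable def jointCNumRangeR {n m : ℕ} (C : Matrix (Fin n) (Fin n) ℂ)
    (A : Fin m → Matrix (Fin n) (Fin n) ℂ) : Set (Fin m → ℝ) :=
  { p | ∃ U ∈ Matrix.unitaryGroup (Fin n) ℂ,
      ∀ j, (p j : ℂ) = (C * (star U * A j * U)).trace }

/-- The eigenvalues of a Hermitian matrix, arranged in descending order
`λ₁(H) ≥ … ≥ λₙ(H)` (junk value `0` if `H` is not Hermitian). -/
noncomputable def eigDesc {n : ℕ} (H : Matrix (Fin n) (Fin n) ℂ) : Fin n → ℝ :=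
  if h : H.IsHermitian then
    fun i => (h.eigenvalues ∘ Tuple.sort h.eigenvalues) i.rev
  else 0

/-! ### Auxiliary lemmas -/

lemma sum_dite_fin {M : Type*} [AddCommMonoid M] {N d : ℕ} (hNd : N ≤ d) (F : Fin N → M) :
    (∑ j : Fin d, if h : (j : ℕ) < N then F ⟨j, h⟩ else 0) = ∑ i : Fin N, F i := by
  have h1 : (∑ j : Fin d, if h : (j : ℕ) < N then F ⟨j, h⟩ else 0)
      = ∑ j ∈ Finset.univ.map (Fin.castLEEmb hNd),
          (if h : (j : ℕ) < N then F ⟨j, h⟩ else 0) := by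
    apply (Finset.sum_subset (Finset.subset_univ _) ?_).symm
    intro j _ hj
    rw [dif_neg]
    intro h
    apply hj
    simp only [Finset.mem_map, Finset.mem_univ, true_and]
    exact ⟨⟨j, h⟩, by simp [Fin.castLEEmb, Fin.castLE]⟩
  rw [h1, Finset.sum_map]
  apply Finset.sum_congr rfl
  intro i _
  simp [Fin.castLEEmb, Fin.castLE]

lemma aux_isCompact_convexHull {m : ℕ} {s : Set (Fin m → ℝ)} (hs : IsCompact s) :
    IsCompact (convexHull ℝ s) := by
  rcases s.eq_empty_or_nonempty with rfl | hne
  · simpa using isCompact_empty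
  obtain ⟨x₀, hx₀⟩ := hne
  set d := m + 1 with hd
  have key : convexHull ℝ s =
      (fun q : (Fin d → ℝ) × (Fin d → Fin m → ℝ) => ∑ i, q.1 i • q.2 i) ''
        (stdSimplex ℝ (Fin d) ×ˢ Set.univ.pi fun _ => s) := by
    apply Set.Subset.antisymm
    · intro x hx
      rw [convexHull_eq_union] at hx
      simp only [Set.mem_iUnion] at hx
      obtain ⟨t, hts, hai, hxt⟩ := hx
      have hcard : t.card ≤ d := by
        have h1 := hai.card_le_finrank_succ
        have h2 : Module.finrank ℝ ↥(vectorSpan ℝ (Set.range (Subtype.val : ↑t → Fin m → ℝ)))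
            ≤ Module.finrank ℝ (Fin m → ℝ) := Submodule.finrank_le _
        simp only [Fintype.card_coe] at h1
        have h3 : Module.finrank ℝ (Fin m → ℝ) = m := by simp
        omega
      rw [Finset.convexHull_eq] at hxt
      obtain ⟨w, hw0, hw1, hwx⟩ := hxt
      set N := t.card with hN
      set e := t.equivFin with he
      set p : Fin d → Fin m → ℝ := fun j =>
        if h : (j : ℕ) < N then ((e.symm ⟨j, h⟩ : ↑t) : Fin m → ℝ) else x₀ with hp
      set w' : Fin d → ℝ := fun j =>
        if h : (j : ℕ) < N then w ((e.symm ⟨j, h⟩ : ↑t) : Fin m → ℝ) else 0 with hw'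
      have hsum : (∑ j : Fin d, w' j) = ∑ i : Fin N, w ((e.symm i : ↑t) : Fin m → ℝ) := by
        simp only [hw']
        exact sum_dite_fin hcard (fun i => w ((e.symm i : ↑t) : Fin m → ℝ))
      have hattach : ∑ i : Fin N, w ((e.symm i : ↑t) : Fin m → ℝ) = ∑ y ∈ t, w y := by
        rw [Equiv.sum_comp e.symm (fun y : ↑t => w (y : Fin m → ℝ))]
        simpa using Finset.sum_attach t fun y => w y
      refine ⟨⟨w', p⟩, ⟨⟨?_, ?_⟩, ?_⟩, ?_⟩
      · intro j
        by_cases h : (j : ℕ) < N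
        · simpa [hw', h] using hw0 _ (e.symm ⟨j, h⟩).2
        · simp [hw', h]
      · rw [hsum, hattach, hw1]
      · intro j _
        by_cases h : (j : ℕ) < N
        · simpa [hp, h] using hts (e.symm ⟨j, h⟩).2
        · simpa [hp, h] using hx₀
      · show (∑ i : Fin d, w' i • p i) = x
        have h1 : (∑ j : Fin d, w' j • p j)
            = ∑ i : Fin N, w ((e.symm i : ↑t) : Fin m → ℝ) • ((e.symm i : ↑t) : Fin m → ℝ) := by
          rw [← sum_dite_fin hcard
            (fun i : Fin N => w ((e.symm i : ↑t) : Fin m → ℝ) • ((e.symm i : ↑t) : Fin m → ℝ))]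
          apply Finset.sum_congr rfl
          intro j _
          by_cases h : (j : ℕ) < N
          · simp only [hw', hp, dif_pos h]
          · simp only [hw', hp, dif_neg h, zero_smul]
        rw [h1, Equiv.sum_comp e.symm (fun y : ↑t => w (y : Fin m → ℝ) • (y : Fin m → ℝ))]
        rw [← hwx, Finset.centerMass_eq_of_sum_1 _ _ hw1]
        simpa using Finset.sum_attach t fun y => w y • y
    · rintro x ⟨⟨w', p⟩, ⟨⟨hw0, hw1⟩, hps⟩, rfl⟩
      exact mem_convexHull_of_exists_fintype w' p hw0 hw1 (fun i => hps i (Set.mem_univ i)) rfl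
  rw [key]
  apply IsCompact.image
  · exact (isCompact_stdSimplex ℝ (Fin d)).prod (isCompact_univ_pi fun _ => hs)
  · apply continuous_finset_sum
    intro i _
    exact ((continuous_apply i).comp continuous_fst).smul ((continuous_apply i).comp continuous_snd)

lemma aux_trace_diag_mul {n : ℕ} (c : Fin n → ℝ) (M : Matrix (Fin n) (Fin n) ℂ) :
    (Matrix.diagonal (fun i => (c i : ℂ)) * M).trace = ∑ i, (c i : ℂ) * M i i := by
  simp [Matrix.trace, Matrix.diag, Matrix.diagonal_mul]

lemma aux_trace_eq {n : ℕ} (c : Fin n → ℝ) {H : Matrix (Fin n) (Fin n) ℂ} (hH : H.IsHermitian)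
    (U : Matrix (Fin n) (Fin n) ℂ) :
    (Matrix.diagonal (fun i => (c i : ℂ)) * (star U * H * U)).trace
      = ((∑ i, ∑ k, c i * hH.eigenvalues k *
          Complex.normSq ((star (hH.eigenvectorUnitary : Matrix (Fin n) (Fin n) ℂ) * U) k i) : ℝ) : ℂ) := by
  set W : Matrix (Fin n) (Fin n) ℂ := (hH.eigenvectorUnitary : Matrix (Fin n) (Fin n) ℂ) with hW
  set V : Matrix (Fin n) (Fin n) ℂ := star W * U with hV
  have hM : star U * H * U = star V * Matrix.diagonal (fun k => (hH.eigenvalues k : ℂ)) * V := by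
    conv_lhs => rw [hH.spectral_theorem, Unitary.conjStarAlgAut_apply]
    have : Matrix.diagonal (RCLike.ofReal ∘ hH.eigenvalues) =
        Matrix.diagonal (fun k => (hH.eigenvalues k : ℂ)) := rfl
    rw [this, hV, Matrix.star_mul, star_star, hW]
    noncomm_ring
  rw [hM, aux_trace_diag_mul]
  have hentry : ∀ i, (star V * Matrix.diagonal (fun k => (hH.eigenvalues k : ℂ)) * V) i i
      = ∑ k, ((hH.eigenvalues k : ℂ)) * (Complex.normSq (V k i) : ℂ) := by
    intro i
    rw [Matrix.mul_apply]
    apply Finset.sum_congr rfl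
    intro k _
    rw [Matrix.mul_diagonal, Matrix.star_eq_conjTranspose, Matrix.conjTranspose_apply]
    calc star (V k i) * (hH.eigenvalues k : ℂ) * V k i
        = (hH.eigenvalues k : ℂ) * (V k i * star (V k i)) := by ring
      _ = (hH.eigenvalues k : ℂ) * (Complex.normSq (V k i) : ℂ) := by
          rw [Complex.star_def, Complex.mul_conj]
  push_cast
  apply Finset.sum_congr rfl
  intro i _
  rw [hentry i, Finset.mul_sum]
  apply Finset.sum_congr rfl
  intro k _
  ring

lemma aux_ds_mem {n : ℕ} {V : Matrix (Fin n) (Fin n) ℂ} (hV : V ∈ Matrix.unitaryGroup (Fin n) ℂ) :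
    Matrix.of (fun i k => Complex.normSq (V k i)) ∈ doublyStochastic ℝ (Fin n) := by
  rw [mem_doublyStochastic]
  have h1 : star V * V = 1 := (Matrix.mem_unitaryGroup_iff').mp hV
  have h2 : V * star V = 1 := (Matrix.mem_unitaryGroup_iff).mp hV
  refine ⟨fun i j => Complex.normSq_nonneg _, ?_, ?_⟩
  · funext i
    have := congrFun (congrFun h1 i) i
    rw [Matrix.mul_apply] at this
    have h3 : ∀ k, (star V) i k * V k i = (Complex.normSq (V k i) : ℂ) := by
      intro k
      rw [Matrix.star_eq_conjTranspose, Matrix.conjTranspose_apply, Complex.star_def,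
        mul_comm, Complex.mul_conj]
    simp only [h3] at this
    have h4 : ((∑ k, Complex.normSq (V k i) : ℝ) : ℂ) = ((1 : ℝ) : ℂ) := by
      push_cast
      simpa using this
    have h5 := Complex.ofReal_injective h4
    simp only [Matrix.mulVec, dotProduct, Pi.one_apply, mul_one]
    simpa using h5
  · funext k
    have := congrFun (congrFun h2 k) k
    rw [Matrix.mul_apply] at this
    have h3 : ∀ i, V k i * (star V) i k = (Complex.normSq (V k i) : ℂ) := by
      intro i
      rw [Matrix.star_eq_conjTranspose, Matrix.conjTranspose_apply, Complex.star_def,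
        Complex.mul_conj]
    simp only [h3] at this
    have h4 : ((∑ i, Complex.normSq (V k i) : ℝ) : ℂ) = ((1 : ℝ) : ℂ) := by
      push_cast
      simpa using this
    have h5 := Complex.ofReal_injective h4
    simp only [Matrix.vecMul, dotProduct, Pi.one_apply, one_mul]
    simpa using h5

lemma aux_mu_antitone {n : ℕ} (l : Fin n → ℝ) :
    Antitone (fun i : Fin n => (l ∘ Tuple.sort l) i.rev) := by
  intro i j hij
  exact Tuple.monotone_sort l (Fin.rev_le_rev.mpr hij)

lemma aux_ds_bound {n : ℕ} (c l : Fin n → ℝ) (hc : Antitone c)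
    {S : Matrix (Fin n) (Fin n) ℝ} (hS : S ∈ doublyStochastic ℝ (Fin n)) :
    ∑ i, ∑ k, c i * l k * S i k ≤ ∑ i, c i * (l ∘ Tuple.sort l) (Fin.rev i) := by
  set μ : Fin n → ℝ := fun i => (l ∘ Tuple.sort l) i.rev with hμ
  have hμa : Antitone μ := aux_mu_antitone l
  have hmono : Monovary c μ := by
    intro i j hij
    rcases le_or_gt i j with h | h
    · exact absurd (hμa h) (not_le.mpr hij)
    · exact hc h.le
  set L : Matrix (Fin n) (Fin n) ℝ →ₗ[ℝ] ℝ :=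
    { toFun := fun S => ∑ i, ∑ k, c i * l k * S i k
      map_add' := by
        intro x y
        simp [Matrix.add_apply, mul_add, Finset.sum_add_distrib]
      map_smul' := by
        intro r x
        simp [Matrix.smul_apply, Finset.mul_sum, smul_eq_mul]
        apply Finset.sum_congr rfl; intro i _
        apply Finset.sum_congr rfl; intro k _
        ring } with hL
  have hcvx : ConvexOn ℝ Set.univ (fun S => L S) := L.convexOn convex_univ
  have hSc : S ∈ convexHull ℝ {x | ∃ σ : Equiv.Perm (Fin n), Equiv.Perm.permMatrix ℝ σ = x} := by
    rw [← doublyStochastic_eq_convexHull_permMatrix]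
    exact hS
  obtain ⟨P, hP, hle⟩ := hcvx.exists_ge_of_mem_convexHull (Set.subset_univ _) hSc
  obtain ⟨σ, rfl⟩ := hP
  have hperm : L (Equiv.Perm.permMatrix ℝ σ) = ∑ i, c i * l (σ i) := by
    simp only [hL, LinearMap.coe_mk, AddHom.coe_mk]
    apply Finset.sum_congr rfl
    intro i _
    simp [Equiv.Perm.permMatrix, PEquiv.toMatrix_apply, Equiv.toPEquiv_apply, mul_ite,
      Finset.sum_ite_eq]
  set π : Equiv.Perm (Fin n) := Fin.revPerm.trans (Tuple.sort l) with hπ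
  have hlπ : ∀ x, l (π x) = μ x := fun x => rfl
  set τ : Equiv.Perm (Fin n) := σ.trans π.symm with hτ
  have h6 : ∀ i, l (σ i) = μ (τ i) := by
    intro i
    rw [← hlπ (τ i)]
    simp [hτ]
  have h7 : (∑ i, c i * l (σ i)) ≤ ∑ i, c i * μ i := by
    calc (∑ i, c i * l (σ i)) = ∑ i, c i • μ (τ i) := by
          simp only [smul_eq_mul]
          exact Finset.sum_congr rfl fun i _ => by rw [h6]
      _ ≤ ∑ i, c i • μ i := hmono.sum_smul_comp_perm_le_sum_smul
      _ = ∑ i, c i * μ i := by simp [smul_eq_mul]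
  calc ∑ i, ∑ k, c i * l k * S i k = L S := rfl
    _ ≤ L (Equiv.Perm.permMatrix ℝ σ) := hle
    _ = ∑ i, c i * l (σ i) := hperm
    _ ≤ ∑ i, c i * μ i := h7

lemma aux_attain {n : ℕ} (c : Fin n → ℝ) {H : Matrix (Fin n) (Fin n) ℂ} (hH : H.IsHermitian) :
    ∃ U ∈ Matrix.unitaryGroup (Fin n) ℂ,
      (Matrix.diagonal (fun i => (c i : ℂ)) * (star U * H * U)).trace
        = ((∑ i, c i * ((hH.eigenvalues ∘ Tuple.sort hH.eigenvalues) (Fin.rev i)) : ℝ) : ℂ) := by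
  set l := hH.eigenvalues with hl
  set W : Matrix (Fin n) (Fin n) ℂ := (hH.eigenvectorUnitary : Matrix (Fin n) (Fin n) ℂ) with hW
  have hWmem : W ∈ Matrix.unitaryGroup (Fin n) ℂ := hH.eigenvectorUnitary.2
  have hWW : W * star W = 1 := (Matrix.mem_unitaryGroup_iff).mp hWmem
  have hWW' : star W * W = 1 := (Matrix.mem_unitaryGroup_iff').mp hWmem
  set π : Equiv.Perm (Fin n) := Fin.revPerm.trans (Tuple.sort l) with hπ
  set U : Matrix (Fin n) (Fin n) ℂ := W.submatrix id ⇑π with hU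
  have hstarU : star U = (star W).submatrix ⇑π id := by
    rw [hU, Matrix.star_eq_conjTranspose, Matrix.conjTranspose_submatrix,
      Matrix.star_eq_conjTranspose]
  have hUmem : U ∈ Matrix.unitaryGroup (Fin n) ℂ := by
    rw [Matrix.mem_unitaryGroup_iff, hstarU, hU]
    have := Matrix.submatrix_mul_equiv W (star W) (id : Fin n → Fin n) π (id : Fin n → Fin n)
    rw [this, hWW]
    simp
  have hD : star W * H * W = Matrix.diagonal (fun k => (l k : ℂ)) := by
    conv_lhs => rw [hH.spectral_theorem, Unitary.conjStarAlgAut_apply]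
    have h1 : star W * ((W * Matrix.diagonal (RCLike.ofReal ∘ l)) * star W) * W
        = (star W * W) * Matrix.diagonal (RCLike.ofReal ∘ l) * (star W * W) := by
      noncomm_ring
    rw [← hW, h1, hWW', one_mul, mul_one]
    rfl
  have hconj : star U * H * U = Matrix.diagonal (fun k => (l (π k) : ℂ)) := by
    rw [hstarU, hU]
    have h2 : H = H.submatrix (id : Fin n → Fin n) (id : Fin n → Fin n) := by
      rw [Matrix.submatrix_id_id]
    have h3 : (star W).submatrix ⇑π id * H = (star W * H).submatrix ⇑π (id : Fin n → Fin n) := by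
      conv_lhs => rw [h2]
      have := Matrix.submatrix_mul_equiv (star W) H ⇑π (Equiv.refl (Fin n)) (id : Fin n → Fin n)
      simpa using this
    rw [h3]
    have h4 := Matrix.submatrix_mul_equiv (star W * H) W ⇑π (Equiv.refl (Fin n)) ⇑π
    simp only [Equiv.coe_refl] at h4
    rw [h4, hD, Matrix.submatrix_diagonal _ ⇑π π.injective]
    rfl
  refine ⟨U, hUmem, ?_⟩
  rw [hconj, Matrix.diagonal_mul_diagonal, Matrix.trace_diagonal]
  push_cast
  apply Finset.sum_congr rfl
  intro i _
  have : π i = Tuple.sort l (Fin.rev i) := by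
    simp [hπ, Equiv.trans_apply]
  rw [this]
  simp

lemma aux_unitary_compact {n : ℕ} :
    IsCompact (Matrix.unitaryGroup (Fin n) ℂ : Set (Matrix (Fin n) (Fin n) ℂ)) := by
  have hclosed : IsClosed (Matrix.unitaryGroup (Fin n) ℂ : Set (Matrix (Fin n) (Fin n) ℂ)) := by
    have : (Matrix.unitaryGroup (Fin n) ℂ : Set (Matrix (Fin n) (Fin n) ℂ))
        = (fun U : Matrix (Fin n) (Fin n) ℂ => U * star U) ⁻¹' {1} := by
      ext U
      simp [Matrix.mem_unitaryGroup_iff]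
    rw [this]
    have hstar : Continuous (fun U : Matrix (Fin n) (Fin n) ℂ => star U) := by
      simp only [Matrix.star_eq_conjTranspose]
      exact Continuous.matrix_conjTranspose continuous_id
    exact IsClosed.preimage (Continuous.matrix_mul continuous_id hstar) isClosed_singleton
  have hsub : (Matrix.unitaryGroup (Fin n) ℂ : Set (Matrix (Fin n) (Fin n) ℂ))
      ⊆ Set.univ.pi fun _ : Fin n => Set.univ.pi fun _ : Fin n => Metric.closedBall (0 : ℂ) 1 := by
    intro U hU
    intro i _
    intro j _
    simp only [Metric.mem_closedBall, dist_zero_right]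
    have h1 : U * star U = 1 := (Matrix.mem_unitaryGroup_iff).mp hU
    have h2 := congrFun (congrFun h1 i) i
    rw [Matrix.mul_apply] at h2
    have h3 : ∀ k, U i k * (star U) k i = (Complex.normSq (U i k) : ℂ) := by
      intro k
      rw [Matrix.star_eq_conjTranspose, Matrix.conjTranspose_apply, Complex.star_def,
        Complex.mul_conj]
    simp only [h3] at h2
    have h4 : ((∑ k, Complex.normSq (U i k) : ℝ) : ℂ) = ((1 : ℝ) : ℂ) := by
      push_cast
      simpa using h2
    have h5 := Complex.ofReal_injective h4
    have h6 : Complex.normSq (U i j) ≤ 1 := by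
      rw [← h5]
      exact Finset.single_le_sum (fun k _ => Complex.normSq_nonneg _) (Finset.mem_univ j)
    have habs := Complex.normSq_eq_norm_sq (U i j)
    nlinarith [norm_nonneg (U i j)]
  apply IsCompact.of_isClosed_subset ?_ hclosed hsub
  exact isCompact_univ_pi fun _ => isCompact_univ_pi fun _ => isCompact_closedBall _ _

lemma aux_herm_conj {n : ℕ} {B : Matrix (Fin n) (Fin n) ℂ} (hB : B.IsHermitian)
    (U : Matrix (Fin n) (Fin n) ℂ) : (star U * B * U).IsHermitian := by
  show (star U * B * U)ᴴ = star U * B * U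
  simp [Matrix.conjTranspose_mul, Matrix.star_eq_conjTranspose, hB.eq, Matrix.mul_assoc]

lemma aux_trace_real {n : ℕ} (c : Fin n → ℝ) {M : Matrix (Fin n) (Fin n) ℂ} (hM : M.IsHermitian) :
    (((Matrix.diagonal (fun i => (c i : ℂ)) * M).trace.re : ℂ))
      = (Matrix.diagonal (fun i => (c i : ℂ)) * M).trace := by
  rw [Complex.conj_eq_iff_re.mp]
  have hC : (Matrix.diagonal (fun i => (c i : ℂ))).IsHermitian := by
    apply Matrix.isHermitian_diagonal_iff.mpr
    intro i
    simp [_root_.IsSelfAdjoint, Complex.star_def, Complex.conj_ofReal]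
  calc (starRingEnd ℂ) (Matrix.diagonal (fun i => (c i : ℂ)) * M).trace
      = star ((Matrix.diagonal (fun i => (c i : ℂ)) * M).trace) := rfl
    _ = ((Matrix.diagonal (fun i => (c i : ℂ)) * M)ᴴ).trace := (Matrix.trace_conjTranspose _).symm
    _ = (Mᴴ * (Matrix.diagonal (fun i => (c i : ℂ)))ᴴ).trace := by rw [Matrix.conjTranspose_mul]
    _ = (M * Matrix.diagonal (fun i => (c i : ℂ))).trace := by rw [hM.eq, hC.eq]
    _ = _ := Matrix.trace_mul_comm _ _

lemma aux_herm_sum {n m : ℕ} (v : Fin m → ℝ) (A : Fin m → Matrix (Fin n) (Fin n) ℂ)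
    (hA : ∀ j, (A j).IsHermitian) : (∑ j, (v j : ℂ) • A j).IsHermitian := by
  show (∑ j, (v j : ℂ) • A j)ᴴ = ∑ j, (v j : ℂ) • A j
  rw [Matrix.conjTranspose_sum]
  apply Finset.sum_congr rfl
  intro j _
  rw [Matrix.conjTranspose_smul, (hA j).eq, Complex.star_def, Complex.conj_ofReal]

lemma aux_trace_lin {n m : ℕ} (Cd : Matrix (Fin n) (Fin n) ℂ) (v : Fin m → ℝ)
    (A : Fin m → Matrix (Fin n) (Fin n) ℂ) (U : Matrix (Fin n) (Fin n) ℂ) :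
    ∑ j, (v j : ℂ) * (Cd * (star U * A j * U)).trace
      = (Cd * (star U * (∑ j, (v j : ℂ) • A j) * U)).trace := by
  have h1 : Cd * (star U * (∑ j, (v j : ℂ) • A j) * U)
      = ∑ j, (v j : ℂ) • (Cd * (star U * A j * U)) := by
    rw [Finset.mul_sum, Finset.sum_mul, Finset.mul_sum]
    apply Finset.sum_congr rfl
    intro j _
    rw [Matrix.mul_smul, Matrix.smul_mul, Matrix.mul_smul]
  rw [h1, Matrix.trace_sum]
  apply Finset.sum_congr rfl
  intro j _
  rw [Matrix.trace_smul, smul_eq_mul]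

theorem stmt_11 {n m : ℕ} (hn : 0 < n) (hm : 0 < m)
    (c : Fin n → ℝ) (hc : Antitone c)
    (C : Matrix (Fin n) (Fin n) ℂ)
    (hC : C = Matrix.diagonal fun i => (c i : ℂ))
    (A : Fin m → Matrix (Fin n) (Fin n) ℂ) (hA : ∀ j, (A j).IsHermitian) :
    convexHull ℝ (jointCNumRangeR C A) =
      ⋂ v ∈ { v : Fin m → ℝ | ∑ i, v i * v i = 1 },
        { a : Fin m → ℝ | ∑ j, v j * a j ≤
            ∑ i, c i * eigDesc (∑ j, (v j : ℂ) • A j) i } := by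
  subst hC
  set Cd : Matrix (Fin n) (Fin n) ℂ := Matrix.diagonal (fun i => (c i : ℂ)) with hCd
  set S : Set (Fin m → ℝ) := jointCNumRangeR Cd A with hS
  -- `S` as a continuous image of the unitary group
  set φ : Matrix (Fin n) (Fin n) ℂ → (Fin m → ℝ) :=
    fun U => fun j => ((Cd * (star U * A j * U)).trace).re with hφ
  have hφreal : ∀ (U : Matrix (Fin n) (Fin n) ℂ) (j : Fin m),
      ((φ U j : ℝ) : ℂ) = (Cd * (star U * A j * U)).trace := by
    intro U j
    exact aux_trace_real c (aux_herm_conj (hA j) U)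
  have hSimg : S = φ '' (Matrix.unitaryGroup (Fin n) ℂ : Set (Matrix (Fin n) (Fin n) ℂ)) := by
    ext p
    constructor
    · rintro ⟨U, hU, hp⟩
      refine ⟨U, hU, funext fun j => ?_⟩
      have := congrArg Complex.re (hp j)
      simpa [hφ] using this.symm
    · rintro ⟨U, hU, rfl⟩
      exact ⟨U, hU, fun j => hφreal U j⟩
  have hφcont : Continuous φ := by
    apply continuous_pi
    intro j
    apply Complex.continuous_re.comp
    apply Continuous.matrix_trace
    apply Continuous.matrix_mul continuous_const
    exact Continuous.matrix_mul
      (Continuous.matrix_mul continuous_star continuous_const) continuous_id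
  have hScomp : IsCompact S := by
    rw [hSimg]
    exact aux_unitary_compact.image hφcont
  have hKcomp : IsCompact (convexHull ℝ S) := aux_isCompact_convexHull hScomp
  have hKclosed : IsClosed (convexHull ℝ S) := hKcomp.isClosed
  have hKconv : Convex ℝ (convexHull ℝ S) := convex_convexHull ℝ S
  -- the key inequality : S is contained in every halfspace
  have hkey : ∀ (v : Fin m → ℝ) (U : Matrix (Fin n) (Fin n) ℂ),
      U ∈ Matrix.unitaryGroup (Fin n) ℂ →
      ∑ j, v j * φ U j ≤ ∑ i, c i * eigDesc (∑ j, (v j : ℂ) • A j) i := by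
    intro v U hU
    set H : Matrix (Fin n) (Fin n) ℂ := ∑ j, (v j : ℂ) • A j with hH0
    have hH : H.IsHermitian := aux_herm_sum v A hA
    have heig : eigDesc H = fun i => (hH.eigenvalues ∘ Tuple.sort hH.eigenvalues) i.rev := by
      rw [eigDesc, dif_pos hH]
    have h1 : ((∑ j, v j * φ U j : ℝ) : ℂ) = (Cd * (star U * H * U)).trace := by
      push_cast
      rw [← aux_trace_lin Cd v A U]
      apply Finset.sum_congr rfl
      intro j _
      rw [hφreal U j]
    rw [aux_trace_eq c hH U] at h1
    have h2 := Complex.ofReal_injective h1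
    rw [h2, heig]
    have hVmem : star ((hH.eigenvectorUnitary : Matrix (Fin n) (Fin n) ℂ)) * U
        ∈ Matrix.unitaryGroup (Fin n) ℂ :=
      mul_mem (Unitary.star_mem hH.eigenvectorUnitary.2) hU
    have := aux_ds_bound c hH.eigenvalues hc (aux_ds_mem hVmem)
    simpa using this
  -- attainment : the bound is achieved by an element of S
  have hattain : ∀ v : Fin m → ℝ, ∃ p ∈ S,
      ∑ j, v j * p j = ∑ i, c i * eigDesc (∑ j, (v j : ℂ) • A j) i := by
    intro v
    set H : Matrix (Fin n) (Fin n) ℂ := ∑ j, (v j : ℂ) • A j with hH0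
    have hH : H.IsHermitian := aux_herm_sum v A hA
    have heig : eigDesc H = fun i => (hH.eigenvalues ∘ Tuple.sort hH.eigenvalues) i.rev := by
      rw [eigDesc, dif_pos hH]
    obtain ⟨U, hU, htr⟩ := aux_attain c hH
    refine ⟨φ U, hSimg ▸ ⟨U, hU, rfl⟩, ?_⟩
    have h1 : ((∑ j, v j * φ U j : ℝ) : ℂ) = (Cd * (star U * H * U)).trace := by
      push_cast
      rw [← aux_trace_lin Cd v A U]
      apply Finset.sum_congr rfl
      intro j _
      rw [hφreal U j]
    rw [htr] at h1
    have h2 := Complex.ofReal_injective h1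
    rw [h2, heig]
  apply Set.Subset.antisymm
  · -- convexHull S ⊆ ⋂ halfspaces
    apply convexHull_min
    · intro p hp
      rw [Set.mem_iInter₂]
      intro v hv
      rw [hSimg] at hp
      obtain ⟨U, hU, rfl⟩ := hp
      exact hkey v U hU
    · apply convex_iInter₂
      intro v hv
      apply convex_halfSpace_le
      constructor
      · intro a b
        simp [mul_add, Finset.sum_add_distrib]
      · intro r a
        simp only [Pi.smul_apply, smul_eq_mul, Finset.mul_sum]
        apply Finset.sum_congr rfl
        intro j _
        ring
  · -- ⋂ halfspaces ⊆ convexHull S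
    intro x hx
    by_contra hxK
    obtain ⟨f, u, hfa, hux⟩ := geometric_hahn_banach_closed_point hKconv hKclosed hxK
    set v₀ : Fin m → ℝ := fun i => f (fun j => if i = j then 1 else 0) with hv₀
    have hf : ∀ a : Fin m → ℝ, f a = ∑ i, a i * v₀ i := by
      intro a
      have := LinearMap.pi_apply_eq_sum_univ
        (f.toLinearMap : (Fin m → ℝ) →ₗ[ℝ] ℝ) a
      simpa [smul_eq_mul, hv₀] using this
    have hp₀S : φ 1 ∈ S := hSimg ▸ ⟨1, one_mem _, rfl⟩
    have hp₀K : φ 1 ∈ convexHull ℝ S := subset_convexHull ℝ S hp₀S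
    have hpos : 0 < ∑ i, v₀ i * v₀ i := by
      rcases (Finset.sum_nonneg fun i _ => mul_self_nonneg (v₀ i)).lt_or_eq with h | h
      · exact h
      · exfalso
        have hz : ∀ i ∈ Finset.univ, v₀ i * v₀ i = 0 := by
          intro i _
          have := (Finset.sum_eq_zero_iff_of_nonneg
            (fun i _ => mul_self_nonneg (v₀ i))).mp h.symm
          exact this i (Finset.mem_univ i)
        have hv0 : ∀ i, v₀ i = 0 := fun i => mul_self_eq_zero.mp (hz i (Finset.mem_univ i))
        have hfx0 : f x = 0 := by rw [hf x]; simp [hv0]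
        have hfp0 : f (φ 1) = 0 := by rw [hf (φ 1)]; simp [hv0]
        have := hfa _ hp₀K
        rw [hfp0] at this
        rw [hfx0] at hux
        linarith
    set t : ℝ := Real.sqrt (∑ i, v₀ i * v₀ i) with ht0
    have ht : 0 < t := Real.sqrt_pos.mpr hpos
    have htt : t * t = ∑ i, v₀ i * v₀ i := Real.mul_self_sqrt hpos.le
    set v : Fin m → ℝ := fun i => v₀ i / t with hvdef
    have hvunit : ∑ i, v i * v i = 1 := by
      have : ∀ i, v i * v i = (v₀ i * v₀ i) / (t * t) := by
        intro i
        rw [hvdef]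
        field_simp
      rw [Finset.sum_congr rfl (fun i _ => this i), ← Finset.sum_div, ← htt]
      field_simp
    have hxv : ∑ j, v j * x j ≤ ∑ i, c i * eigDesc (∑ j, (v j : ℂ) • A j) i := by
      have := Set.mem_iInter₂.mp hx v hvunit
      exact this
    obtain ⟨p₁, hp₁S, hp₁⟩ := hattain v
    have hp₁K : p₁ ∈ convexHull ℝ S := subset_convexHull ℝ S hp₁S
    have hv₀i : ∀ i, v₀ i = t * v i := by
      intro i
      rw [hvdef]
      field_simp
    have hfx : f x = t * ∑ j, v j * x j := by
      rw [hf x, Finset.mul_sum]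
      apply Finset.sum_congr rfl
      intro i _
      rw [hv₀i i]
      ring
    have hfp₁ : f p₁ = t * ∑ j, v j * p₁ j := by
      rw [hf p₁, Finset.mul_sum]
      apply Finset.sum_congr rfl
      intro i _
      rw [hv₀i i]
      ring
    have h8 : f x ≤ f p₁ := by
      rw [hfx, hfp₁, hp₁]
      exact mul_le_mul_of_nonneg_left hxv ht.le
    have h9 := hfa p₁ hp₁K
    linarith
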